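/- Let n ≥ 1 be a natural number, set d = 2^{n+1} − 2 and d' = 2^n − 2, and define f_e(i) = 1 + 3·⌊log₂(min(i+1, e−i+1))⌋ for 0 ≤ i ≤ e (for e ∈ {d, d'}). Then for every index i with 2^{n−1} ≤ i ≤ d − 2^{n−1}, one has f_d(i) = 3 + max{ f_{d'}(j) : j ∈ {i − 2^n, i − 2^{n−1}, i} and 0 ≤ j ≤ d' }. -/

import Mathlib

private lemma log2_le' {k x : ℕ} (h2 : x < 2 ^ (k + 1)) : Nat.log 2 x ≤ k := by
  rcases Nat.eq_zero_or_pos x with rfl | hx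
  · simp
  · exact Nat.lt_succ_iff.mp (Nat.log_lt_of_lt_pow (by omega) h2)

private lemma log2_ge' {k x : ℕ} (h1 : 2 ^ k ≤ x) : k ≤ Nat.log 2 x := by
  have hx : x ≠ 0 := by have : (1:ℕ) ≤ 2 ^ k := Nat.one_le_two_pow; omega
  exact (Nat.le_log_iff_pow_le one_lt_two hx).mpr h1

/-- Arithmetic core of case (b) of the Karatsuba martingale-length theorem: for
`d = 2^{n+1} − 2`, `d' = 2^n − 2` and a middle index `2^{n−1} ≤ i ≤ d − 2^{n−1}`,
`f_d(i) = 3 + max{ f_{d'}(j) : j ∈ {i − 2^n, i − 2^{n−1}, i}, 0 ≤ j ≤ d' }`,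
where `f_e(i) = 1 + 3·⌊log₂(min(i+1, e−i+1))⌋`. -/
theorem karatsuba_length_middle (n : ℕ) (hn : 1 ≤ n) (d d' : ℕ)
    (hd : d = 2 ^ (n + 1) - 2) (hd' : d' = 2 ^ n - 2) :
    ∀ i, 2 ^ (n - 1) ≤ i → i ≤ d - 2 ^ (n - 1) →
      1 + 3 * Nat.log 2 (min (i + 1) (d - i + 1)) =
        3 + (({(i : ℤ) - 2 ^ n, (i : ℤ) - 2 ^ (n - 1), (i : ℤ)} : Finset ℤ).filter
            (fun j => 0 ≤ j ∧ j ≤ (d' : ℤ))).sup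
          (fun j => 1 + 3 * Nat.log 2 (min (j.toNat + 1) (d' - j.toNat + 1))) := by
  intro i hi1 hi2
  obtain ⟨m, rfl⟩ : ∃ m, n = m + 1 := ⟨n - 1, by omega⟩
  simp only [Nat.add_sub_cancel] at hi1 hi2 ⊢
  have hdq : d = 4 * 2 ^ m - 2 := by
    rw [hd]; have : (2 : ℕ) ^ (m + 1 + 1) = 4 * 2 ^ m := by ring
    omega
  have hdq' : d' = 2 * 2 ^ m - 2 := by
    rw [hd']; have : (2 : ℕ) ^ (m + 1) = 2 * 2 ^ m := by ring
    omega
  set h : ℕ := 2 ^ m with hh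
  have h1 : 1 ≤ h := Nat.one_le_two_pow
  rw [show ((2 : ℤ) ^ (m + 1)) = 2 * (h : ℤ) by rw [hh]; push_cast; ring,
      show ((2 : ℤ) ^ m) = (h : ℤ) by rw [hh]; push_cast; ring]
  rcases (by omega :
      (h ≤ i ∧ i ≤ 2 * h - 2) ∨ i = 2 * h - 1 ∨ i = 2 * h ∨
        (2 * h + 1 ≤ i ∧ i ≤ 3 * h - 2)) with ⟨hA1, hA2⟩ | hB1 | hB2 | ⟨hC1, hC2⟩
  · -- Case A : h ≤ i ≤ 2h - 2
    have hm : 1 ≤ m := by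
      rcases Nat.eq_zero_or_pos m with rfl | hm
      · simp only [pow_zero] at hh; omega
      · exact hm
    obtain ⟨k, rfl⟩ : ∃ k, m = k + 1 := ⟨m - 1, by omega⟩
    have hq : h = 2 * 2 ^ k := by rw [hh]; ring
    have hmin : min (i + 1) (d - i + 1) = i + 1 := by omega
    have hlog : Nat.log 2 (i + 1) = k + 1 :=
      Nat.log_eq_of_pow_le_of_lt_pow (by omega)
        (by have : (2 : ℕ) ^ (k + 1 + 1) = 2 * h := by rw [hh]; ring
            omega)
    rw [hmin, hlog, show 1 + 3 * (k + 1) = 3 + (1 + 3 * k) from by ring]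
    congr 1
    symm
    apply le_antisymm
    · apply Finset.sup_le
      intro j hj
      simp only [Finset.mem_filter, Finset.mem_insert, Finset.mem_singleton] at hj
      obtain ⟨hj1, hj2, hj3⟩ := hj
      rcases hj1 with rfl | rfl | rfl
      · omega
      · have : Nat.log 2
            (min (((i : ℤ) - (h : ℤ)).toNat + 1) (d' - ((i : ℤ) - (h : ℤ)).toNat + 1)) ≤ k :=
          log2_le' (by omega)
        omega
      · have : Nat.log 2 (min ((i : ℤ).toNat + 1) (d' - (i : ℤ).toNat + 1)) ≤ k :=
          log2_le' (by omega)
        omega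
    · by_cases hw : i ≤ 2 * h - 1 - 2 ^ k
      · refine le_trans ?_ (Finset.le_sup (b := (i : ℤ)) ?_)
        · have : k ≤ Nat.log 2 (min ((i : ℤ).toNat + 1) (d' - (i : ℤ).toNat + 1)) :=
            log2_ge' (by omega)
          omega
        · exact Finset.mem_filter.mpr ⟨by simp, by omega, by omega⟩
      · refine le_trans ?_ (Finset.le_sup (b := (i : ℤ) - (h : ℤ)) ?_)
        · have : k ≤ Nat.log 2
              (min (((i : ℤ) - (h : ℤ)).toNat + 1) (d' - ((i : ℤ) - (h : ℤ)).toNat + 1)) :=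
            log2_ge' (by omega)
          omega
        · exact Finset.mem_filter.mpr ⟨by simp, by omega, by omega⟩
  · -- Case B1 : i = 2h - 1
    have hmin : min (i + 1) (d - i + 1) = 2 * h := by omega
    have hlog : Nat.log 2 (2 * h) = m + 1 :=
      Nat.log_eq_of_pow_le_of_lt_pow
        (by have : (2 : ℕ) ^ (m + 1) = 2 * h := by rw [hh]; ring
            omega)
        (by have : (2 : ℕ) ^ (m + 1 + 1) = 4 * h := by rw [hh]; ring
            omega)
    rw [hmin, hlog, show 1 + 3 * (m + 1) = 3 + (1 + 3 * m) from by ring]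
    congr 1
    symm
    apply le_antisymm
    · apply Finset.sup_le
      intro j hj
      simp only [Finset.mem_filter, Finset.mem_insert, Finset.mem_singleton] at hj
      obtain ⟨hj1, hj2, hj3⟩ := hj
      rcases hj1 with rfl | rfl | rfl
      · omega
      · have : Nat.log 2
            (min (((i : ℤ) - (h : ℤ)).toNat + 1) (d' - ((i : ℤ) - (h : ℤ)).toNat + 1)) ≤ m :=
          log2_le' (by have : (2 : ℕ) ^ (m + 1) = 2 * h := by rw [hh]; ring
                       omega)
        omega
      · omega
    · refine le_trans ?_ (Finset.le_sup (b := (i : ℤ) - (h : ℤ)) ?_)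
      · have : m ≤ Nat.log 2
            (min (((i : ℤ) - (h : ℤ)).toNat + 1) (d' - ((i : ℤ) - (h : ℤ)).toNat + 1)) :=
          log2_ge' (by omega)
        omega
      · exact Finset.mem_filter.mpr ⟨by simp, by omega, by omega⟩
  · -- Case B2 : i = 2h
    have hm : 1 ≤ m := by
      rcases Nat.eq_zero_or_pos m with rfl | hm
      · simp only [pow_zero] at hh; omega
      · exact hm
    obtain ⟨k, rfl⟩ : ∃ k, m = k + 1 := ⟨m - 1, by omega⟩
    have hq : h = 2 * 2 ^ k := by rw [hh]; ring
    have hmin : min (i + 1) (d - i + 1) = 2 * h - 1 := by omega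
    have hlog : Nat.log 2 (2 * h - 1) = k + 1 :=
      Nat.log_eq_of_pow_le_of_lt_pow (by omega)
        (by have : (2 : ℕ) ^ (k + 1 + 1) = 2 * h := by rw [hh]; ring
            omega)
    rw [hmin, hlog, show 1 + 3 * (k + 1) = 3 + (1 + 3 * k) from by ring]
    congr 1
    symm
    apply le_antisymm
    · apply Finset.sup_le
      intro j hj
      simp only [Finset.mem_filter, Finset.mem_insert, Finset.mem_singleton] at hj
      obtain ⟨hj1, hj2, hj3⟩ := hj
      rcases hj1 with rfl | rfl | rfl
      · have : Nat.log 2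
            (min (((i : ℤ) - 2 * (h : ℤ)).toNat + 1) (d' - ((i : ℤ) - 2 * (h : ℤ)).toNat + 1)) ≤ k :=
          log2_le' (by omega)
        omega
      · have : Nat.log 2
            (min (((i : ℤ) - (h : ℤ)).toNat + 1) (d' - ((i : ℤ) - (h : ℤ)).toNat + 1)) ≤ k :=
          log2_le' (by omega)
        omega
      · omega
    · refine le_trans ?_ (Finset.le_sup (b := (i : ℤ) - (h : ℤ)) ?_)
      · have : k ≤ Nat.log 2
            (min (((i : ℤ) - (h : ℤ)).toNat + 1) (d' - ((i : ℤ) - (h : ℤ)).toNat + 1)) :=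
          log2_ge' (by omega)
        omega
      · exact Finset.mem_filter.mpr ⟨by simp, by omega, by omega⟩
  · -- Case C : 2h + 1 ≤ i ≤ 3h - 2
    have hm : 1 ≤ m := by
      rcases Nat.eq_zero_or_pos m with rfl | hm
      · simp only [pow_zero] at hh; omega
      · exact hm
    obtain ⟨k, rfl⟩ : ∃ k, m = k + 1 := ⟨m - 1, by omega⟩
    have hq : h = 2 * 2 ^ k := by rw [hh]; ring
    have hmin : min (i + 1) (d - i + 1) = d - i + 1 := by omega
    have hlog : Nat.log 2 (d - i + 1) = k + 1 :=
      Nat.log_eq_of_pow_le_of_lt_pow (by omega)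
        (by have : (2 : ℕ) ^ (k + 1 + 1) = 2 * h := by rw [hh]; ring
            omega)
    rw [hmin, hlog, show 1 + 3 * (k + 1) = 3 + (1 + 3 * k) from by ring]
    congr 1
    symm
    apply le_antisymm
    · apply Finset.sup_le
      intro j hj
      simp only [Finset.mem_filter, Finset.mem_insert, Finset.mem_singleton] at hj
      obtain ⟨hj1, hj2, hj3⟩ := hj
      rcases hj1 with rfl | rfl | rfl
      · have : Nat.log 2
            (min (((i : ℤ) - 2 * (h : ℤ)).toNat + 1) (d' - ((i : ℤ) - 2 * (h : ℤ)).toNat + 1)) ≤ k :=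
          log2_le' (by omega)
        omega
      · have : Nat.log 2
            (min (((i : ℤ) - (h : ℤ)).toNat + 1) (d' - ((i : ℤ) - (h : ℤ)).toNat + 1)) ≤ k :=
          log2_le' (by omega)
        omega
      · omega
    · by_cases hw : 2 * h + 2 ^ k - 1 ≤ i
      · refine le_trans ?_ (Finset.le_sup (b := (i : ℤ) - 2 * (h : ℤ)) ?_)
        · have : k ≤ Nat.log 2
              (min (((i : ℤ) - 2 * (h : ℤ)).toNat + 1) (d' - ((i : ℤ) - 2 * (h : ℤ)).toNat + 1)) :=
            log2_ge' (by omega)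
          omega
        · exact Finset.mem_filter.mpr ⟨by simp, by omega, by omega⟩
      · refine le_trans ?_ (Finset.le_sup (b := (i : ℤ) - (h : ℤ)) ?_)
        · have : k ≤ Nat.log 2
              (min (((i : ℤ) - (h : ℤ)).toNat + 1) (d' - ((i : ℤ) - (h : ℤ)).toNat + 1)) :=
            log2_ge' (by omega)
          omega
        · exact Finset.mem_filter.mpr ⟨by simp, by omega, by omega⟩
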